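/- Let d ≥ 1, n ≥ 1, B_1,...,B_d > 0. Define for each composition (n_1,...,n_d) of n the weight k = B_d^{n − n_d}/∏_{r=1}^{d−1} B_r^{n_r} and the constant Δ = ((d−1)/d)·n_1·B_1 − ∑_{t=2}^{d} n_t·B_t/d. Then ∑ over all (n_1,...,n_d) with ∑ n_t = n of multinomial(n; n_1,...,n_d)·k·Δ = 0. -/

import Mathlib

open Finset

lemma mult_succ {d : ℕ} (g : Fin d → ℕ) (t : Fin d) :
    Nat.multinomial Finset.univ (Function.update g t (g t + 1)) * (g t + 1)
      = (∑ i, g i + 1) * Nat.multinomial Finset.univ g := by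
  have h1 := Nat.multinomial_spec Finset.univ (Function.update g t (g t + 1))
  have h2 := Nat.multinomial_spec Finset.univ g
  have hsum : ∑ i, Function.update g t (g t + 1) i = ∑ i, g i + 1 := by
    rw [Finset.sum_update_of_mem (mem_univ t), ← Finset.erase_eq,
      ← Finset.add_sum_erase _ g (mem_univ t)]
    ring
  have hprod : ∏ i, Nat.factorial (Function.update g t (g t + 1) i)
      = (g t + 1) * ∏ i, Nat.factorial (g i) := by
    simp only [Function.apply_update (fun _ k => Nat.factorial k) g t (g t + 1)]
    rw [Finset.prod_update_of_mem (mem_univ t), Nat.factorial_succ, ← Finset.erase_eq,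
      ← Finset.mul_prod_erase _ (fun i => Nat.factorial (g i)) (mem_univ t)]
    ring
  have hpos : 0 < ∏ i, Nat.factorial (g i) := Finset.prod_pos fun i _ => Nat.factorial_pos _
  apply Nat.eq_of_mul_eq_mul_left hpos
  calc (∏ i, Nat.factorial (g i)) *
        (Nat.multinomial Finset.univ (Function.update g t (g t + 1)) * (g t + 1))
      = (∏ i, Nat.factorial (Function.update g t (g t + 1) i)) *
          Nat.multinomial Finset.univ (Function.update g t (g t + 1)) := by rw [hprod]; ring
    _ = Nat.factorial (∑ i, g i + 1) := by rw [h1, hsum]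
    _ = (∑ i, g i + 1) * ((∏ i, Nat.factorial (g i)) * Nat.multinomial Finset.univ g) := by
          rw [h2, Nat.factorial_succ]
    _ = (∏ i, Nat.factorial (g i)) * ((∑ i, g i + 1) * Nat.multinomial Finset.univ g) := by ring

lemma key {d : ℕ} (x : Fin d → ℝ) (t : Fin d) (n : ℕ) :
    ∑ f ∈ Finset.piAntidiag Finset.univ (n + 1),
        (Nat.multinomial Finset.univ f : ℝ) * (f t : ℝ) * ∏ r, x r ^ f r
      = (n + 1) * x t * (∑ r, x r) ^ n := by
  rw [Finset.sum_pow_eq_sum_piAntidiag Finset.univ x n, Finset.mul_sum]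
  rw [← Finset.sum_filter_of_ne (p := fun f => f t ≠ 0)
    (fun f hf h hft => h (by simp [hft]))]
  refine Finset.sum_nbij' (i := fun f => Function.update f t (f t - 1))
    (j := fun g => Function.update g t (g t + 1)) ?_ ?_ ?_ ?_ ?_
  · intro f hf
    simp only [Finset.mem_filter, Finset.mem_piAntidiag] at hf ⊢
    obtain ⟨⟨hsum, -⟩, hft⟩ := hf
    refine ⟨?_, fun i _ => mem_univ i⟩
    rw [Finset.sum_update_of_mem (mem_univ t), ← Finset.erase_eq]
    rw [← Finset.add_sum_erase _ f (mem_univ t)] at hsum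
    omega
  · intro g hg
    simp only [Finset.mem_filter, Finset.mem_piAntidiag] at hg ⊢
    obtain ⟨hsum, -⟩ := hg
    refine ⟨⟨?_, fun i _ => mem_univ i⟩, by simp⟩
    rw [Finset.sum_update_of_mem (mem_univ t), ← Finset.erase_eq]
    rw [← Finset.add_sum_erase _ g (mem_univ t)] at hsum
    omega
  · intro f hf
    simp only [Finset.mem_filter] at hf
    funext i
    rcases eq_or_ne i t with rfl | h
    · simp only [Function.update_self]
      omega
    · simp [Function.update_of_ne h]
  · intro g hg
    funext i
    rcases eq_or_ne i t with rfl | h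
    · simp
    · simp [Function.update_of_ne h]
  · intro f hf
    simp only [Finset.mem_filter, Finset.mem_piAntidiag] at hf
    obtain ⟨⟨hsum, -⟩, hft⟩ := hf
    set g := Function.update f t (f t - 1) with hg
    have hgt : g t = f t - 1 := by simp [hg]
    have hfg : Function.update g t (g t + 1) = f := by
      funext i
      rcases eq_or_ne i t with rfl | h
      · simp only [hg, Function.update_self]; omega
      · simp [hg, Function.update_of_ne h]
    have hsumg : ∑ i, g i = n := by
      rw [hg, Finset.sum_update_of_mem (mem_univ t), ← Finset.erase_eq]
      rw [← Finset.add_sum_erase _ f (mem_univ t)] at hsum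
      omega
    have hm := mult_succ g t
    rw [hfg, hsumg] at hm
    have hft' : f t = g t + 1 := by rw [hgt]; omega
    have hprod : ∏ r, x r ^ f r = x t * ∏ r, x r ^ g r := by
      conv_lhs => rw [← hfg]
      simp only [Function.apply_update (fun r k => x r ^ k) g t (g t + 1)]
      rw [Finset.prod_update_of_mem (mem_univ t), ← Finset.erase_eq,
        ← Finset.mul_prod_erase _ (fun r => x r ^ g r) (mem_univ t)]
      ring
    have hcast : (Nat.multinomial Finset.univ f : ℝ) * (f t : ℝ)
        = (n + 1) * (Nat.multinomial Finset.univ g : ℝ) := by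
      rw [hft']
      exact_mod_cast congrArg (Nat.cast : ℕ → ℝ) hm
    rw [hprod, hcast]
    push_cast
    ring


/-- Cancellation lemma: the Carver-weighted sum of the constant terms vanishes.
For each composition `(n_1,…,n_d)` of `n`, with weight
`k = B_d^{n−n_d} / ∏_{r=1}^{d−1} B_r^{n_r}` and constant
`Δ = ((d−1)/d)·n_1·B_1 − ∑_{t=2}^d n_t·B_t/d`, the sum
`∑ multinomial(n; n_1,…,n_d)·k·Δ` over all compositions is `0`.
Indices `1,…,d` are encoded by `Fin d`, with `i0` the first and `il` the last. -/
theorem stmt_13 (d n : ℕ) (hd : 1 ≤ d) (hn : 1 ≤ n) (B : Fin d → ℝ)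
    (hpos : ∀ r, 0 < B r)
    (i0 il : Fin d) (hi0 : (i0 : ℕ) = 0) (hil : (il : ℕ) = d - 1) :
    ∑ f ∈ Finset.Nat.antidiagonalTuple d n,
        (Nat.multinomial Finset.univ f : ℝ)
          * (B il ^ (n - f il) / ∏ r ∈ Finset.univ.erase il, B r ^ f r)
          * (((d : ℝ) - 1) / d * (f i0 : ℝ) * B i0
              - ∑ t ∈ Finset.univ.erase i0, (f t : ℝ) * B t / d)
      = 0 := by
  obtain ⟨m, rfl⟩ : ∃ m, n = m + 1 := ⟨n - 1, by omega⟩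
  set x : Fin d → ℝ := fun r => (B r)⁻¹ with hx
  rw [← Finset.piAntidiag_univ_fin_eq_antidiagonalTuple]
  have hterm : ∀ f ∈ Finset.piAntidiag Finset.univ (m + 1),
      (Nat.multinomial Finset.univ f : ℝ)
          * (B il ^ (m + 1 - f il) / ∏ r ∈ Finset.univ.erase il, B r ^ f r)
          * (((d : ℝ) - 1) / d * (f i0 : ℝ) * B i0
              - ∑ t ∈ Finset.univ.erase i0, (f t : ℝ) * B t / d)
        = B il ^ (m + 1) *
            (((d : ℝ) - 1) / d * B i0 *
                ((Nat.multinomial Finset.univ f : ℝ) * (f i0 : ℝ) * ∏ r, x r ^ f r)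
              - ∑ t ∈ Finset.univ.erase i0,
                  B t / d * ((Nat.multinomial Finset.univ f : ℝ) * (f t : ℝ) * ∏ r, x r ^ f r)) := by
    intro f hf
    simp only [Finset.mem_piAntidiag] at hf
    have hle : f il ≤ m + 1 := hf.1 ▸ Finset.single_le_sum (f := f) (fun i _ => Nat.zero_le _)
      (Finset.mem_univ il)
    have hprodx : ∏ r, x r ^ f r
        = (B il ^ f il)⁻¹ * (∏ r ∈ Finset.univ.erase il, B r ^ f r)⁻¹ := by
      rw [hx]
      simp only [inv_pow]
      rw [Finset.prod_inv_distrib,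
        ← Finset.mul_prod_erase _ (fun r => B r ^ f r) (Finset.mem_univ il), mul_inv]
    have hw : B il ^ (m + 1 - f il) / ∏ r ∈ Finset.univ.erase il, B r ^ f r
        = B il ^ (m + 1) * ∏ r, x r ^ f r := by
      rw [pow_sub₀ _ (hpos il).ne' hle, hprodx]
      ring
    rw [hw, mul_sub, mul_sub, Finset.mul_sum, Finset.mul_sum]
    congr 1
    · ring
    · exact Finset.sum_congr rfl fun t ht => by ring
  have hS : ∀ t : Fin d, ∑ f ∈ Finset.piAntidiag Finset.univ (m + 1),
      (Nat.multinomial Finset.univ f : ℝ) * (f t : ℝ) * ∏ r, x r ^ f r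
        = (m + 1) * x t * (∑ r, x r) ^ m := fun t => key x t m
  have hBx : ∀ t : Fin d, B t * x t = 1 := fun t => mul_inv_cancel₀ (hpos t).ne'
  set P : ℝ := (∑ r, x r) ^ m with hP
  rw [Finset.sum_congr rfl hterm, ← Finset.mul_sum, Finset.sum_sub_distrib, ← Finset.mul_sum,
    Finset.sum_comm, hS i0]
  have h2 : ∀ t ∈ Finset.univ.erase i0,
      (∑ f ∈ Finset.piAntidiag Finset.univ (m + 1),
        B t / d * ((Nat.multinomial Finset.univ f : ℝ) * (f t : ℝ) * ∏ r, x r ^ f r))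
      = (m + 1) * P / d := by
    intro t ht
    rw [← Finset.mul_sum, hS t]
    calc B t / d * ((m + 1) * x t * P) = B t * x t * ((m + 1) * P / d) := by ring
      _ = (m + 1) * P / d := by rw [hBx t]; ring
  rw [Finset.sum_congr rfl h2, Finset.sum_const, nsmul_eq_mul,
    Finset.card_erase_of_mem (Finset.mem_univ i0), Finset.card_univ, Fintype.card_fin]
  have hcard : ((d - 1 : ℕ) : ℝ) = (d : ℝ) - 1 := by
    push_cast [Nat.cast_sub hd]
    ring
  rw [hcard]
  have e1 : ((d : ℝ) - 1) / d * B i0 * ((m + 1) * x i0 * P)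
      = ((d : ℝ) - 1) / d * ((m + 1) * P) := by
    calc ((d : ℝ) - 1) / d * B i0 * ((m + 1) * x i0 * P)
        = B i0 * x i0 * (((d : ℝ) - 1) / d * ((m + 1) * P)) := by ring
      _ = ((d : ℝ) - 1) / d * ((m + 1) * P) := by rw [hBx i0]; ring
  rw [e1]
  ring
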